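/- (Tverberg's theorem, linear case.) Let $f$ be an affine (linear) map from the $N$-dimensional simplex $\Delta_N$ to $\mathbb{R}^d$ with $N = (d+1)(r-1)$. Then there exist $r$ pairwise disjoint faces $\sigma_1,\dots,\sigma_r$ of $\Delta_N$ such that $f(\sigma_1) \cap \cdots \cap f(\sigma_r) \neq \emptyset$. Equivalently: any $(r-1)(d+1)+1$ points in $\mathbb{R}^d$ can be partitioned into $r$ subsets whose convex hulls have a common point. -/

import Mathlib

/-- The closed face of the standard `N`-simplex spanned by the vertex set `S`. -/
def face (N : ℕ) (S : Finset (Fin (N + 1))) : Set (Fin (N + 1) → ℝ) :=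
  {x | x ∈ stdSimplex ℝ (Fin (N + 1)) ∧ ∀ i, i ∉ S → x i = 0}

/-- The boundary `∂Δ_N` of the standard `N`-simplex. -/
def sBoundary (N : ℕ) : Set (Fin (N + 1) → ℝ) :=
  {x | x ∈ stdSimplex ℝ (Fin (N + 1)) ∧ ∃ i, x i = 0}

open Finset Module
open scoped RealInnerProductSpace

section Helpers

variable {E : Type*} [NormedAddCommGroup E] [InnerProductSpace ℝ E]

lemma exists_index_weights {ι : Type*} [Fintype ι] [DecidableEq ι]
    (s : Finset ι) (g : ι → E) {x : E} (hx : x ∈ convexHull ℝ (g '' ↑s)) :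
    ∃ w : ι → ℝ, (∀ j, 0 ≤ w j) ∧ (∀ j, j ∉ s → w j = 0) ∧
      ∑ j, w j = 1 ∧ ∑ j, w j • g j = x := by
  rw [mem_convexHull_iff_exists_fintype] at hx
  obtain ⟨ι', _, w, z, hw0, hw1, hz, hsum⟩ := hx
  have hchoice : ∀ i : ι', ∃ j, j ∈ s ∧ g j = z i := by
    intro i; rcases hz i with ⟨j, hj, hgj⟩; exact ⟨j, hj, hgj⟩
  choose σ hσs hσg using hchoice
  refine ⟨fun j => ∑ i ∈ univ.filter (fun i => σ i = j), w i, ?_, ?_, ?_, ?_⟩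
  · intro j; exact Finset.sum_nonneg fun i _ => hw0 i
  · intro j hj
    apply Finset.sum_eq_zero
    intro i hi
    exact absurd ((Finset.mem_filter.1 hi).2 ▸ hσs i) hj
  · rw [Finset.sum_fiberwise]; exact hw1
  · rw [← hsum]
    calc ∑ j, (∑ i ∈ univ.filter (fun i => σ i = j), w i) • g j
        = ∑ j, ∑ i ∈ univ.filter (fun i => σ i = j), w i • z i := by
          refine Finset.sum_congr rfl fun j _ => ?_
          rw [Finset.sum_smul]
          refine Finset.sum_congr rfl fun i hi => ?_
          rw [← hσg i, (Finset.mem_filter.1 hi).2]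
      _ = ∑ i, w i • z i := Finset.sum_fiberwise _ _ _

lemma min_inner {K : Set E} (hK : Convex ℝ K) {z : E} (hzK : z ∈ K)
    (hmin : ∀ y ∈ K, ‖z‖ ≤ ‖y‖) {y : E} (hy : y ∈ K) : ‖z‖ ^ 2 ≤ ⟪z, y⟫ := by
  by_contra hcon
  push_neg at hcon
  have haneg : ⟪z, y - z⟫ < 0 := by
    rw [inner_sub_right, real_inner_self_eq_norm_sq]; linarith
  set a : ℝ := ⟪z, y - z⟫ with ha
  set b : ℝ := ‖y - z‖ ^ 2 with hb
  have hbnn : (0:ℝ) ≤ b := sq_nonneg _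
  set t : ℝ := min 1 (-a / (b + 1)) with ht
  have htpos : 0 < t := lt_min one_pos (div_pos (neg_pos.2 haneg) (by linarith))
  have ht1 : t ≤ 1 := min_le_left _ _
  have hmem : z + t • (y - z) ∈ K := by
    have h2 := hK hzK hy (by linarith : (0:ℝ) ≤ 1 - t) htpos.le (by ring)
    convert h2 using 1
    rw [smul_sub]; module
  have hexp : ‖z + t • (y - z)‖ ^ 2 = ‖z‖ ^ 2 + 2 * t * a + t ^ 2 * b := by
    rw [norm_add_sq_real, real_inner_smul_right, norm_smul, Real.norm_eq_abs, mul_pow, sq_abs]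
    ring
  have hle : ‖z‖ ^ 2 ≤ ‖z + t • (y - z)‖ ^ 2 := by
    have := hmin _ hmem
    nlinarith [norm_nonneg z, norm_nonneg (z + t • (y - z))]
  have htb : t * (b + 1) ≤ -a := by
    have h3 : t ≤ -a / (b + 1) := min_le_right _ _
    rwa [le_div_iff₀ (by linarith : (0:ℝ) < b + 1)] at h3
  nlinarith [hle, hexp, htpos, hbnn]

lemma exists_inner_nonpos {κ : Type*} (z : E) {v : κ → E}
    (h0 : (0 : E) ∈ convexHull ℝ (Set.range v)) : ∃ i, ⟪z, v i⟫ ≤ 0 := by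
  by_contra hcon
  push_neg at hcon
  have hconv : Convex ℝ {y : E | 0 < ⟪z, y⟫} := by
    intro x hx y hy a b hna hnb hab
    simp only [Set.mem_setOf_eq] at hx hy ⊢
    rw [inner_add_right, real_inner_smul_right, real_inner_smul_right]
    rcases lt_or_eq_of_le hna with h1 | h1
    · nlinarith [mul_nonneg hnb hy.le]
    · have hb1 : b = 1 := by linarith
      rw [← h1, hb1]; simpa using hy
  have hmem : (0 : E) ∈ {y : E | 0 < ⟪z, y⟫} :=
    convexHull_min (by rintro y ⟨i, rfl⟩; exact hcon i) hconv h0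
  simpa using hmem



lemma exists_affine_dep {ι : Type*} [Fintype ι] [DecidableEq ι] [FiniteDimensional ℝ E]
    (hcard : finrank ℝ E < Fintype.card ι) {z : E} (hz : z ≠ 0)
    {g : ι → E} (hplane : ∀ j, ⟪z, g j⟫ = ‖z‖ ^ 2) :
    ∃ w : ι → ℝ, ∑ j, w j = 0 ∧ ∑ j, w j • g j = 0 ∧ ∃ j, w j ≠ 0 := by
  have hι : Nonempty ι := by
    rw [← Fintype.card_pos_iff]; omega
  obtain ⟨j₀⟩ := hι
  have hmemW : ∀ j, g j - g j₀ ∈ (ℝ ∙ z)ᗮ := by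
    intro j
    rw [Submodule.mem_orthogonal_singleton_iff_inner_right, inner_sub_right,
      hplane j, hplane j₀, sub_self]
  have hfrW : finrank ℝ ((ℝ ∙ z)ᗮ) + 1 = finrank ℝ E := by
    have h1 := Submodule.finrank_add_finrank_orthogonal (K := (ℝ ∙ z))
    rw [finrank_span_singleton hz] at h1
    omega
  have hcard' : finrank ℝ ((ℝ ∙ z)ᗮ) < Fintype.card {j : ι // j ≠ j₀} := by
    have h2 : Fintype.card {j : ι // j ≠ j₀} = Fintype.card ι - 1 := by
      simp [Fintype.card_subtype_compl]
    omega
  have hnli : ¬ LinearIndependent ℝ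
      (fun i : {j : ι // j ≠ j₀} => (⟨g i.1 - g j₀, hmemW i.1⟩ : (ℝ ∙ z)ᗮ)) := by
    intro hli
    exact absurd hli.fintype_card_le_finrank (by omega)
  rw [Fintype.not_linearIndependent_iff] at hnli
  obtain ⟨gg, hgg, i₁, hi₁⟩ := hnli
  have hrel : ∑ i : {j : ι // j ≠ j₀}, gg i • (g i.1 - g j₀) = 0 := by
    have h := congrArg ((ℝ ∙ z)ᗮ.subtype) hgg
    rw [map_sum, map_zero] at h
    simpa using h
  set w : ι → ℝ := fun j => if h : j = j₀ then -∑ i : {j : ι // j ≠ j₀}, gg i else gg ⟨j, h⟩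
    with hwdef
  have hw_ne : ∀ (j : ι) (h : j ≠ j₀), w j = gg ⟨j, h⟩ := fun j h => by
    rw [hwdef]; exact dif_neg h
  have hw_ne' : ∀ i : {j : ι // j ≠ j₀}, w i.1 = gg i := fun i =>
    (hw_ne i.1 i.2).trans (congrArg gg (Subtype.coe_eta i i.2))
  have hw_eq : w j₀ = -∑ i : {j : ι // j ≠ j₀}, gg i := by
    rw [hwdef]; exact dif_pos rfl
  have hsub : ∀ (f : ι → ℝ), ∑ j ∈ univ.erase j₀, f j = ∑ i : {j : ι // j ≠ j₀}, f i.1 :=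
    fun f => Finset.sum_subtype (p := fun j => j ≠ j₀) (univ.erase j₀) (by simp) f
  have hsubE : ∀ (f : ι → E), ∑ j ∈ univ.erase j₀, f j = ∑ i : {j : ι // j ≠ j₀}, f i.1 :=
    fun f => Finset.sum_subtype (p := fun j => j ≠ j₀) (univ.erase j₀) (by simp) f
  have herase : ∀ {M : Type} (f : ι → ℝ), True := fun _ => trivial
  refine ⟨w, ?_, ?_, ⟨i₁.1, by rw [hw_ne' i₁]; exact hi₁⟩⟩
  · rw [← Finset.add_sum_erase _ w (Finset.mem_univ j₀), hsub w]
    simp only [hw_ne', hw_eq]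
    exact neg_add_cancel _
  · rw [← Finset.add_sum_erase _ (fun j => w j • g j) (Finset.mem_univ j₀),
      hsubE (fun j => w j • g j)]
    simp only [hw_ne', hw_eq]
    have hexp : ∑ i : {j : ι // j ≠ j₀}, gg i • g i.1
        = ∑ i : {j : ι // j ≠ j₀}, gg i • g j₀ := by
      have h5 := hrel
      simp only [smul_sub, Finset.sum_sub_distrib, sub_eq_zero] at h5
      exact h5
    rw [hexp, ← Finset.sum_smul, neg_smul, neg_add_cancel]

theorem colorful_caratheodory {ι κ : Type*} [Fintype ι] [DecidableEq ι] [Fintype κ] [Nonempty κ]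
    [FiniteDimensional ℝ E] (hdim : Module.finrank ℝ E < Fintype.card ι)
    (V : ι → κ → E) (hV : ∀ j, (0 : E) ∈ convexHull ℝ (Set.range (V j))) :
    ∃ c : ι → κ, (0 : E) ∈ convexHull ℝ (Set.range fun j => V j (c j)) := by
  classical
  have hι : Nonempty ι := by rw [← Fintype.card_pos_iff]; omega
  obtain ⟨jW⟩ := hι
  set 𝒮 : Set E := ⋃ p : Finset ι × (ι → κ), convexHull ℝ ((fun j => V j (p.2 j)) '' ↑p.1)
    with h𝒮
  have hcomp : IsCompact 𝒮 := isCompact_iUnion fun p =>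
    (((p.1 : Set ι)).toFinite.image _).isCompact_convexHull ℝ
  have hne : 𝒮.Nonempty := by
    refine ⟨V jW (Classical.arbitrary κ), Set.mem_iUnion.2 ⟨(univ, fun _ => Classical.arbitrary κ), ?_⟩⟩
    exact subset_convexHull ℝ _ ⟨jW, by simp⟩
  obtain ⟨z, hz𝒮, hminOn⟩ := hcomp.exists_isMinOn hne continuous_norm.continuousOn
  have hmin : ∀ y ∈ 𝒮, ‖z‖ ≤ ‖y‖ := fun y hy => hminOn hy
  obtain ⟨⟨s, c⟩, hzK⟩ := Set.mem_iUnion.1 hz𝒮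
  set g : ι → E := fun j => V j (c j) with hg
  by_cases hz0 : z = 0
  · refine ⟨c, ?_⟩
    rw [← hz0]
    exact convexHull_mono (Set.image_subset_range _ _) hzK
  -- z ≠ 0 : derive a contradiction
  exfalso
  obtain ⟨lam, hlam0, hlamsupp, hlam1, hlamsum⟩ := exists_index_weights s g hzK
  set J : Finset ι := s.filter (fun j => 0 < lam j) with hJ
  have hlamJ : ∀ j, j ∉ J → lam j = 0 := by
    intro j hj
    by_cases hjs : j ∈ s
    · rcases (hlam0 j).lt_or_eq with h | h
      · exact absurd (Finset.mem_filter.2 ⟨hjs, h⟩) hj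
      · exact h.symm
    · exact hlamsupp j hjs
  have hJ1 : ∑ j ∈ J, lam j = 1 := by
    rw [← hlam1]
    exact (Finset.sum_subset (Finset.subset_univ J) (fun j _ hj => hlamJ j hj)).symm ▸ rfl
  have hJz : ∑ j ∈ J, lam j • g j = z := by
    rw [← hlamsum]
    exact Finset.sum_subset (Finset.subset_univ J) (fun j _ hj => by rw [hlamJ j hj, zero_smul])
  have hKmin : ∀ y ∈ convexHull ℝ (g '' ↑s), ‖z‖ ≤ ‖y‖ := fun y hy =>
    hmin y (Set.mem_iUnion.2 ⟨(s, c), hy⟩)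
  have hinner : ∀ j ∈ J, ‖z‖ ^ 2 ≤ ⟪z, g j⟫ := fun j hj =>
    min_inner (convex_convexHull ℝ _) hzK hKmin
      (subset_convexHull ℝ _ (Set.mem_image_of_mem g (Finset.mem_coe.2 ((Finset.filter_subset _ s) hj))))
  have heq : ∀ j ∈ J, ⟪z, g j⟫ = ‖z‖ ^ 2 := by
    have hsum0 : ∑ j ∈ J, lam j * (⟪z, g j⟫ - ‖z‖ ^ 2) = 0 := by
      have h1 : ∑ j ∈ J, lam j * ⟪z, g j⟫ = ⟪z, z⟫ := by
        rw [← hJz, inner_sum]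
        exact Finset.sum_congr rfl fun j _ => by rw [real_inner_smul_right]
      calc ∑ j ∈ J, lam j * (⟪z, g j⟫ - ‖z‖ ^ 2)
          = ∑ j ∈ J, lam j * ⟪z, g j⟫ - (∑ j ∈ J, lam j) * ‖z‖ ^ 2 := by
            rw [Finset.sum_mul]; rw [← Finset.sum_sub_distrib]
            exact Finset.sum_congr rfl fun j _ => by ring
        _ = 0 := by rw [h1, hJ1, real_inner_self_eq_norm_sq]; ring
    intro j hj
    have hterm := (Finset.sum_eq_zero_iff_of_nonneg (fun i hi =>
      mul_nonneg (hlam0 i) (sub_nonneg.2 (hinner i hi)))).1 hsum0 j hj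
    have hlampos : 0 < lam j := (Finset.mem_filter.1 hj).2
    have := mul_eq_zero.1 hterm
    rcases this with h | h
    · exact absurd h hlampos.ne'
    · linarith [sub_eq_zero.1 h]
  -- produce a proper subset J' with z in hull of its image
  obtain ⟨J', hJ'ne, hzJ'⟩ : ∃ J' : Finset ι, J' ≠ univ ∧ z ∈ convexHull ℝ (g '' ↑J') := by
    by_cases hJu : J = univ
    · -- affine dependence step
      have hplane : ∀ j, ⟪z, g j⟫ = ‖z‖ ^ 2 := fun j => heq j (hJu ▸ Finset.mem_univ j)
      obtain ⟨w, hw0, hwg, jne, hjne⟩ := exists_affine_dep hdim hz0 hplane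
      have hpos : ∃ jp, 0 < w jp := by
        by_contra hcon
        push_neg at hcon
        have : ∀ j ∈ univ, w j = 0 :=
          (Finset.sum_eq_zero_iff_of_nonpos (fun j _ => hcon j)).1 hw0
        exact hjne (this jne (Finset.mem_univ _))
      obtain ⟨jp, hjp⟩ := hpos
      set M : Finset ι := univ.filter (fun j => 0 < w j) with hM
      obtain ⟨j₀, hj₀M, hmin'⟩ := Finset.exists_min_image M (fun j => lam j / w j)
        ⟨jp, Finset.mem_filter.2 ⟨Finset.mem_univ _, hjp⟩⟩
      have hwj₀ : 0 < w j₀ := (Finset.mem_filter.1 hj₀M).2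
      set t : ℝ := lam j₀ / w j₀ with htdef
      have htnn : 0 ≤ t := div_nonneg (hlam0 j₀) hwj₀.le
      set lam' : ι → ℝ := fun j => lam j - t * w j with hlam'
      have hlam'0 : ∀ j, 0 ≤ lam' j := by
        intro j
        by_cases hjM : j ∈ M
        · have h2 := hmin' j hjM
          have hwj : 0 < w j := (Finset.mem_filter.1 hjM).2
          have := (div_le_div_iff₀ hwj₀ hwj).1 h2
          simp only [hlam']
          rw [sub_nonneg, htdef, div_mul_eq_mul_div, div_le_iff₀ hwj₀]
          nlinarith
        · have hwj : w j ≤ 0 := by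
            by_contra hc
            exact hjM (Finset.mem_filter.2 ⟨Finset.mem_univ _, lt_of_not_ge hc⟩)
          have : t * w j ≤ 0 := mul_nonpos_of_nonneg_of_nonpos htnn hwj
          have := hlam0 j
          simp only [hlam']
          linarith
      have hlam'j₀ : lam' j₀ = 0 := by
        simp only [hlam', htdef]
        field_simp
        ring
      have hsum1 : ∑ j, lam' j = 1 := by
        simp only [hlam']
        rw [Finset.sum_sub_distrib, ← Finset.mul_sum, hw0, hlam1]
        ring
      have hsumz : ∑ j, lam' j • g j = z := by
        simp only [hlam']
        have : ∀ j, (lam j - t * w j) • g j = lam j • g j - t • (w j • g j) := by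
          intro j; rw [sub_smul, mul_smul]
        rw [Finset.sum_congr rfl fun j _ => this j, Finset.sum_sub_distrib,
          ← Finset.smul_sum, hwg, smul_zero, sub_zero]
        exact hlamsum
      refine ⟨univ.erase j₀, ?_, ?_⟩
      · intro hc
        have h7 := Finset.notMem_erase j₀ (univ : Finset ι)
        rw [hc] at h7
        exact h7 (Finset.mem_univ j₀)
      · have hcm : (univ.erase j₀).centerMass lam' g = z := by
          rw [Finset.centerMass]
          have hs1 : ∑ j ∈ univ.erase j₀, lam' j = 1 := by
            rw [Finset.sum_erase_eq_sub (Finset.mem_univ j₀), hsum1, hlam'j₀, sub_zero]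
          have hs2 : ∑ j ∈ univ.erase j₀, lam' j • g j = z := by
            rw [Finset.sum_erase_eq_sub (Finset.mem_univ j₀), hsumz, hlam'j₀, zero_smul, sub_zero]
          rw [hs1, hs2, inv_one, one_smul]
        rw [← hcm]
        exact Finset.centerMass_mem_convexHull _ (fun j hj => hlam'0 j)
          (by rw [Finset.sum_erase_eq_sub (Finset.mem_univ j₀), hsum1, hlam'j₀, sub_zero]; norm_num)
          (fun j hj => Set.mem_image_of_mem g (Finset.mem_coe.2 hj))
    · refine ⟨J, hJu, ?_⟩
      have hcm : J.centerMass lam g = z := by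
        rw [Finset.centerMass, hJ1, hJz, inv_one, one_smul]
      rw [← hcm]
      exact Finset.centerMass_mem_convexHull _ (fun j hj => hlam0 j)
        (by rw [hJ1]; norm_num) (fun j hj => Set.mem_image_of_mem g (Finset.mem_coe.2 hj))
  obtain ⟨j₀, hj₀⟩ : ∃ j₀, j₀ ∉ J' := by
    by_contra hcon
    push_neg at hcon
    exact hJ'ne (Finset.eq_univ_iff_forall.2 hcon)
  obtain ⟨i₀, hi₀⟩ := exists_inner_nonpos z (hV j₀)
  set c' : ι → κ := Function.update c j₀ i₀ with hc'
  set g' : ι → E := fun j => V j (c' j) with hg'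
  have himg : g '' ↑J' = g' '' ↑J' := by
    apply Set.image_congr
    intro j hj
    have hne : j ≠ j₀ := fun h => hj₀ (h ▸ hj)
    simp only [hg', hc', Function.update_of_ne hne]
    rfl
  have hzK' : z ∈ convexHull ℝ (g' '' ↑(insert j₀ J')) := by
    apply convexHull_mono (Set.image_mono (f := g') ?_)
    · rw [← himg]; exact hzJ'
    · exact_mod_cast Finset.coe_subset.2 (Finset.subset_insert j₀ J')
  have huK' : V j₀ i₀ ∈ convexHull ℝ (g' '' ↑(insert j₀ J')) := by
    apply subset_convexHull
    refine ⟨j₀, by simp, ?_⟩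
    simp only [hg', hc', Function.update_self]
  have hK'min : ∀ y ∈ convexHull ℝ (g' '' ↑(insert j₀ J')), ‖z‖ ≤ ‖y‖ := fun y hy =>
    hmin y (Set.mem_iUnion.2 ⟨(insert j₀ J', c'), hy⟩)
  have hfinal := min_inner (convex_convexHull ℝ _) hzK' hK'min huK'
  have hzpos : 0 < ‖z‖ := norm_pos_iff.2 hz0
  nlinarith

lemma euclid_sum_apply {n : Type*} [Fintype n] {ι' : Type*} (t : Finset ι')
    (F : ι' → EuclideanSpace ℝ n) (p : n) : (∑ j ∈ t, F j) p = ∑ j ∈ t, F j p := by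
  classical
  induction t using Finset.induction_on with
  | empty => simp [PiLp.zero_apply]
  | insert _ _ h ih => rw [Finset.sum_insert h, Finset.sum_insert h, PiLp.add_apply, ih]

noncomputable def tvA (d : ℕ) {ι : Type*} (P : ι → Fin d → ℝ) (j : ι) (b : Fin (d + 1)) : ℝ :=
  if h : (b : ℕ) < d then P j ⟨b, h⟩ else 1

noncomputable def tvQ (q : ℕ) (i : Fin (q + 1)) (a : Fin q) : ℝ :=
  (if a.castSucc = i then 1 else 0) - 1 / (q + 1)

noncomputable def tvV (q d : ℕ) {ι : Type*} (P : ι → Fin d → ℝ) (j : ι) (i : Fin (q + 1)) :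
    EuclideanSpace ℝ (Fin q × Fin (d + 1)) :=
  (WithLp.equiv 2 _).symm fun pr => tvQ q i pr.1 * tvA d P j pr.2

lemma tvV_apply (q d : ℕ) {ι : Type*} (P : ι → Fin d → ℝ) (j : ι) (i : Fin (q + 1))
    (a : Fin q) (b : Fin (d + 1)) : tvV q d P j i (a, b) = tvQ q i a * tvA d P j b := rfl

lemma tvQ_sum (q : ℕ) (a : Fin q) : ∑ i, tvQ q i a = 0 := by
  unfold tvQ
  rw [Finset.sum_sub_distrib, Finset.sum_ite_eq, Finset.sum_const, card_univ,
    Fintype.card_fin]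
  have hq : (q : ℝ) + 1 ≠ 0 := by positivity
  simp only [Finset.mem_univ, if_true, nsmul_eq_mul]
  push_cast
  field_simp
  ring

lemma tvQ_prop (q : ℕ) (S : Fin (q + 1) → ℝ) (h : ∀ a : Fin q, ∑ i, tvQ q i a * S i = 0) :
    ∀ i, S i = (∑ i', S i') / (q + 1) := by
  have hq : (q : ℝ) + 1 ≠ 0 := by positivity
  have hcast : ∀ a : Fin q, S a.castSucc = (∑ i', S i') / (q + 1) := by
    intro a
    have h1 := h a
    have h2 : ∀ i, tvQ q i a * S i = (if a.castSucc = i then S i else 0) - 1 / (q + 1) * S i := by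
      intro i; unfold tvQ; split <;> ring
    rw [Finset.sum_congr rfl fun i _ => h2 i, Finset.sum_sub_distrib, Finset.sum_ite_eq,
      ← Finset.mul_sum] at h1
    simp only [Finset.mem_univ, if_true] at h1
    field_simp at h1
    rw [eq_div_iff hq]
    linarith
  intro i
  rcases Fin.eq_castSucc_or_eq_last i with ⟨a, rfl⟩ | rfl
  · exact hcast a
  · have hsum : ∑ i', S i' = ∑ a : Fin q, S a.castSucc + S (Fin.last q) :=
      Fin.sum_univ_castSucc S
    have h3 : ∑ a : Fin q, S a.castSucc = q * ((∑ i', S i') / (q + 1)) := by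
      rw [Finset.sum_congr rfl fun a _ => hcast a, Finset.sum_const, card_univ,
        Fintype.card_fin, nsmul_eq_mul]
    rw [h3] at hsum
    field_simp at hsum
    rw [eq_div_iff hq]
    linarith

theorem tverberg_core (q d : ℕ) {ι : Type} [Fintype ι] [DecidableEq ι]
    (hcard : q * (d + 1) < Fintype.card ι) (P : ι → Fin d → ℝ) :
    ∃ T : Fin (q + 1) → Finset ι,
      (Pairwise fun i i' => Disjoint (T i) (T i')) ∧
      (∀ x, ∃ i, x ∈ T i) ∧
      ∃ w : ι → ℝ, (∀ j, 0 ≤ w j) ∧ (∀ i, ∑ j ∈ T i, w j = 1) ∧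
        (∀ i i', ∑ j ∈ T i, w j • P j = ∑ j ∈ T i', w j • P j) := by
  classical
  have hq : (q : ℝ) + 1 ≠ 0 := by positivity
  have hzero : ∀ j, (0 : EuclideanSpace ℝ (Fin q × Fin (d + 1)))
      ∈ convexHull ℝ (Set.range (tvV q d P j)) := by
    intro j
    apply mem_convexHull_of_exists_fintype (fun _ : Fin (q + 1) => 1 / ((q : ℝ) + 1)) (tvV q d P j)
    · intro i; positivity
    · rw [Finset.sum_const, card_univ, Fintype.card_fin, nsmul_eq_mul]
      push_cast; field_simp
    · exact fun i => Set.mem_range_self i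
    · ext pr
      obtain ⟨a, b⟩ := pr
      rw [euclid_sum_apply]
      simp only [PiLp.smul_apply, smul_eq_mul, PiLp.zero_apply, tvV_apply]
      calc ∑ i, 1 / ((q : ℝ) + 1) * (tvQ q i a * tvA d P j b)
          = (∑ i, tvQ q i a) * (1 / ((q : ℝ) + 1) * tvA d P j b) := by
            rw [Finset.sum_mul]
            exact Finset.sum_congr rfl fun i _ => by ring
        _ = 0 := by rw [tvQ_sum q a, zero_mul]
  have hdim : Module.finrank ℝ (EuclideanSpace ℝ (Fin q × Fin (d + 1))) < Fintype.card ι := by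
    rw [finrank_euclideanSpace]
    simpa using hcard
  obtain ⟨c, hc⟩ := colorful_caratheodory hdim (tvV q d P) hzero
  rw [← Set.image_univ, ← Finset.coe_univ] at hc
  obtain ⟨lam, hlam0, -, hlam1, hlamsum⟩ := exists_index_weights univ _ hc
  set T : Fin (q + 1) → Finset ι := fun i => univ.filter (fun j => c j = i) with hT
  have hmemT : ∀ i j, j ∈ T i ↔ c j = i := by
    intro i j; rw [hT]; simp
  have hcoord : ∀ a b, ∑ j, lam j * (tvQ q (c j) a * tvA d P j b) = 0 := by
    intro a b
    have h1 : (∑ j, lam j • tvV q d P j (c j)) (a, b)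
        = (0 : EuclideanSpace ℝ (Fin q × Fin (d + 1))) (a, b) := by rw [hlamsum]
    rw [euclid_sum_apply] at h1
    simpa only [PiLp.smul_apply, smul_eq_mul, PiLp.zero_apply, tvV_apply] using h1
  have hgroup : ∀ a b, ∑ i, tvQ q i a * (∑ j ∈ T i, lam j * tvA d P j b) = 0 := by
    intro a b
    have h2 : ∀ i, tvQ q i a * (∑ j ∈ T i, lam j * tvA d P j b)
        = ∑ j ∈ T i, lam j * (tvQ q (c j) a * tvA d P j b) := by
      intro i
      rw [Finset.mul_sum]
      refine Finset.sum_congr rfl fun j hj => ?_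
      rw [(hmemT i j).1 hj]
      ring
    rw [Finset.sum_congr rfl fun i _ => h2 i, hT, Finset.sum_fiberwise]
    exact hcoord a b
  have heqS : ∀ (b : Fin (d + 1)) (i : Fin (q + 1)), ∑ j ∈ T i, lam j * tvA d P j b
      = (∑ i', ∑ j ∈ T i', lam j * tvA d P j b) / (q + 1) := fun b =>
    tvQ_prop q (fun i => ∑ j ∈ T i, lam j * tvA d P j b) (fun a => hgroup a b)
  have hlast : ∀ j, tvA d P j (Fin.last d) = 1 := by
    intro j; unfold tvA; rw [dif_neg (by simp)]
  have hfib : ∀ (f : ι → ℝ), ∑ i, ∑ j ∈ T i, f j = ∑ j, f j := by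
    intro f; rw [hT]; exact Finset.sum_fiberwise _ _ _
  have hTsum : ∀ i, ∑ j ∈ T i, lam j = 1 / (q + 1) := by
    intro i
    have h3 : ∑ j ∈ T i, lam j * tvA d P j (Fin.last d) = ∑ j ∈ T i, lam j :=
      Finset.sum_congr rfl fun j _ => by rw [hlast j, mul_one]
    have h4 := heqS (Fin.last d) i
    rw [h3] at h4
    rw [h4]
    congr 1
    calc ∑ i', ∑ j ∈ T i', lam j * tvA d P j (Fin.last d)
        = ∑ i', ∑ j ∈ T i', lam j :=
          Finset.sum_congr rfl fun i' _ => Finset.sum_congr rfl fun j _ => by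
            rw [hlast j, mul_one]
      _ = 1 := by rw [hfib]; exact hlam1
  refine ⟨T, ?_, ?_, fun j => ((q : ℝ) + 1) * lam j, ?_, ?_, ?_⟩
  · intro i i' hne
    rw [Finset.disjoint_left]
    intro j hji hji'
    exact hne (((hmemT i j).1 hji).symm.trans ((hmemT i' j).1 hji'))
  · exact fun x => ⟨c x, (hmemT (c x) x).2 rfl⟩
  · intro j
    have := hlam0 j
    positivity
  · intro i
    rw [← Finset.mul_sum, hTsum i]
    field_simp
  · intro i i'
    funext k
    rw [Finset.sum_apply, Finset.sum_apply]
    simp only [Pi.smul_apply, smul_eq_mul]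
    have hPA : ∀ j, P j k = tvA d P j k.castSucc := by
      intro j
      unfold tvA
      rw [dif_pos (by simpa using k.isLt)]
      congr 1
    have h5 : ∀ i0 : Fin (q + 1), ∑ j ∈ T i0, ((q : ℝ) + 1) * lam j * P j k
        = ((q : ℝ) + 1) * ((∑ i'', ∑ j ∈ T i'', lam j * tvA d P j k.castSucc) / (q + 1)) := by
      intro i0
      rw [← heqS k.castSucc i0, Finset.mul_sum]
      exact Finset.sum_congr rfl fun j _ => by rw [hPA j]; ring
    rw [h5 i, h5 i']

/-- **Tverberg's theorem (linear case).**  For every affine map `f : Δ_N → ℝ^d` with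
`N = (d+1)(r-1)` there are `r` pairwise disjoint faces of `Δ_N` whose images under `f`
have a common point; equivalently, any `(r-1)(d+1) + 1` points of `ℝ^d` can be
partitioned into `r` subsets whose convex hulls have a common point. -/
theorem stmt16 (r d : ℕ) (hr : 1 ≤ r) (hd : 1 ≤ d) (N : ℕ) (hN : N = (d + 1) * (r - 1))
    (f : (Fin (N + 1) → ℝ) →ᵃ[ℝ] (Fin d → ℝ)) :
    (∃ σ : Fin r → Finset (Fin (N + 1)),
      (Pairwise fun i i' => Disjoint (σ i) (σ i')) ∧
      (⋂ i, f '' face N (σ i)).Nonempty) ∧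
    ∀ P : Fin ((r - 1) * (d + 1) + 1) → (Fin d → ℝ),
      ∃ T : Fin r → Finset (Fin ((r - 1) * (d + 1) + 1)),
        (Pairwise fun i i' => Disjoint (T i) (T i')) ∧
        (∀ x, ∃ i, x ∈ T i) ∧
        (⋂ i, convexHull ℝ (P '' (T i))).Nonempty := by
  classical
  obtain ⟨q, rfl⟩ : ∃ q, r = q + 1 := ⟨r - 1, (Nat.succ_pred_eq_of_pos hr).symm⟩
  simp only [Nat.add_sub_cancel] at hN ⊢
  subst hN
  constructor
  · -- faces part
    obtain ⟨T, hdisj, hcover, w, hw0, hw1, hkey⟩ := tverberg_core q d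
      (ι := Fin ((d + 1) * q + 1))
      (by rw [Fintype.card_fin, Nat.mul_comm]; exact Nat.lt_succ_self _)
      (fun j => f (Pi.single j 1))
    set x : Fin (q + 1) → (Fin ((d + 1) * q + 1) → ℝ) :=
      fun i j => if j ∈ T i then w j else 0 with hx
    have hface : ∀ i, x i ∈ face ((d + 1) * q) (T i) := by
      intro i
      refine ⟨⟨fun j => ?_, ?_⟩, fun j hj => ?_⟩
      · simp only [hx]
        split
        · exact hw0 _
        · exact le_refl 0
      · simp only [hx]
        rw [Finset.sum_ite_mem, Finset.univ_inter]
        exact hw1 i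
      · simp only [hx]
        exact if_neg hj
    have hxcomb : ∀ i, x i = (T i).affineCombination ℝ (fun j => Pi.single j (1:ℝ)) w := by
      intro i
      rw [Finset.affineCombination_eq_linear_combination _ _ _ (hw1 i)]
      funext j'
      rw [Finset.sum_apply]
      simp only [hx, Pi.smul_apply, smul_eq_mul, Pi.single_apply, mul_ite, mul_one, mul_zero]
      exact (Finset.sum_ite_eq (T i) j' w).symm
    have himg : ∀ i, f (x i) = ∑ j ∈ T i, w j • f (Pi.single j 1) := by
      intro i
      rw [hxcomb i, (T i).map_affineCombination _ w (hw1 i),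
        Finset.affineCombination_eq_linear_combination _ _ _ (hw1 i)]
      simp [Function.comp]
    refine ⟨T, hdisj, ⟨f (x 0), Set.mem_iInter.2 fun i => ⟨x i, hface i, ?_⟩⟩⟩
    rw [himg i, himg 0]
    exact hkey i 0
  · -- points part
    intro P
    obtain ⟨T, hdisj, hcover, w, hw0, hw1, hkey⟩ := tverberg_core q d
      (ι := Fin (q * (d + 1) + 1))
      (by rw [Fintype.card_fin]; exact Nat.lt_succ_self _) P
    refine ⟨T, hdisj, hcover, ⟨∑ j ∈ T 0, w j • P j, Set.mem_iInter.2 fun i => ?_⟩⟩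
    have hcm : (T i).centerMass w P = ∑ j ∈ T i, w j • P j := by
      rw [Finset.centerMass, hw1 i, inv_one, one_smul]
    rw [← hkey i 0, ← hcm]
    exact Finset.centerMass_mem_convexHull _ (fun j _ => hw0 j) (by rw [hw1 i]; norm_num)
      (fun j hj => Set.mem_image_of_mem P (Finset.mem_coe.2 hj))
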